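/- For jointly distributed finite random variables U^N, Y^N, S_0, the directed information satisfies |I(U^N → Y^N) − I(U^N → Y^N | S_0)| ≤ log₂|S|, where S is the (finite) alphabet of S_0. -/

import Mathlib

open scoped Classical

noncomputable section

variable {Ω : Type*} [Fintype Ω]

/-- Probability that the random variable `f` (on finite sample space `Ω`
with mass function `μ`) takes value `a`. -/
def prob {α : Type*} (μ : Ω → ℝ) (f : Ω → α) (a : α) : ℝ :=
  ∑ ω : Ω, if f ω = a then μ ω else 0

/-- Shannon entropy (in bits) of the random variable `f`. -/
def ent {α : Type*} [Fintype α] (μ : Ω → ℝ) (f : Ω → α) : ℝ :=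
  ∑ a : α, -(prob μ f a * Real.logb 2 (prob μ f a))

/-- Conditional entropy `H(f | g)` in bits. -/
def condEnt {α β : Type*} [Fintype α] [Fintype β]
    (μ : Ω → ℝ) (f : Ω → α) (g : Ω → β) : ℝ :=
  ent μ (fun ω => (f ω, g ω)) - ent μ g

/-- Mutual information `I(f ; g)` in bits. -/
def mi {α β : Type*} [Fintype α] [Fintype β]
    (μ : Ω → ℝ) (f : Ω → α) (g : Ω → β) : ℝ :=
  ent μ f + ent μ g - ent μ (fun ω => (f ω, g ω))

/-- Conditional mutual information `I(f ; g | h)` in bits. -/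
def cmi {α β γ : Type*} [Fintype α] [Fintype β] [Fintype γ]
    (μ : Ω → ℝ) (f : Ω → α) (g : Ω → β) (h : Ω → γ) : ℝ :=
  condEnt μ f h - condEnt μ f (fun ω => (g ω, h ω))

/-- `f` and `g` are conditionally independent given `h`
(the Markov chain `f − h − g`). -/
def condIndep {α β γ : Type*} (μ : Ω → ℝ) (f : Ω → α) (g : Ω → β) (h : Ω → γ) : Prop :=
  ∀ a b c, prob μ (fun ω => (f ω, g ω, h ω)) (a, b, c) * prob μ h c =
    prob μ (fun ω => (f ω, h ω)) (a, c) * prob μ (fun ω => (g ω, h ω)) (b, c)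

end

noncomputable section

variable {Ω : Type*} [Fintype Ω]

/-- The prefix `Z^{i}` (inclusive) of a finite-horizon process `Z`, encoded as a
finite-valued random variable: coordinates beyond `i` are masked to `none`. -/
def prefixIncl {N : ℕ} {𝒵 : Type*} (Z : Ω → Fin N → 𝒵) (i : Fin N) :
    Ω → (Fin N → Option 𝒵) :=
  fun ω j => if j ≤ i then some (Z ω j) else none

/-- The strict prefix `Z^{i-1}` of a finite-horizon process `Z`. -/
def prefixLT {N : ℕ} {𝒵 : Type*} (Z : Ω → Fin N → 𝒵) (i : Fin N) :
    Ω → (Fin N → Option 𝒵) :=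
  fun ω j => if j < i then some (Z ω j) else none

/-- Directed information `I(U^N → Y^N) = Σ_{i=1}^N I(U^i; Y_i | Y^{i-1})`. -/
def dirInfo {N : ℕ} {𝒰 𝒴 : Type*} [Fintype 𝒰] [Fintype 𝒴]
    (μ : Ω → ℝ) (U : Ω → Fin N → 𝒰) (Y : Ω → Fin N → 𝒴) : ℝ :=
  ∑ i : Fin N, cmi μ (prefixIncl U i) (fun ω => Y ω i) (prefixLT Y i)

/-- Conditional directed information
`I(U^N → Y^N | S_0) = Σ_{i=1}^N I(U^i; Y_i | Y^{i-1}, S_0)`. -/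
def dirInfoCond {N : ℕ} {𝒰 𝒴 𝒮 : Type*} [Fintype 𝒰] [Fintype 𝒴] [Fintype 𝒮]
    (μ : Ω → ℝ) (U : Ω → Fin N → 𝒰) (Y : Ω → Fin N → 𝒴) (S₀ : Ω → 𝒮) : ℝ :=
  ∑ i : Fin N, cmi μ (prefixIncl U i) (fun ω => Y ω i)
    (fun ω => (prefixLT Y i ω, S₀ ω))

end

noncomputable section DIAux

namespace DI

variable {Ω : Type*} [Fintype Ω] {μ : Ω → ℝ}

lemma prob_nonneg (hμ0 : ∀ ω, 0 ≤ μ ω) {α : Type*} (f : Ω → α) (a : α) :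
    0 ≤ prob μ f a := by
  refine Finset.sum_nonneg fun ω _ => ?_
  by_cases h : f ω = a <;> simp [h, hμ0 ω]

lemma sum_prob_one (hμ1 : ∑ ω : Ω, μ ω = 1) {α : Type*} [Fintype α] (f : Ω → α) :
    ∑ a : α, prob μ f a = 1 := by
  rw [← hμ1]
  simp only [prob]
  rw [Finset.sum_comm]
  apply Finset.sum_congr rfl
  intro ω _
  simp [Finset.sum_ite_eq]

lemma sum_mu_comp {α : Type*} [Fintype α] (f : Ω → α) (r : α → ℝ) :
    ∑ a : α, prob μ f a * r a = ∑ ω : Ω, μ ω * r (f ω) := by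
  have h1 : ∀ a : α, prob μ f a * r a
      = ∑ ω : Ω, (if f ω = a then μ ω * r (f ω) else 0) := by
    intro a
    rw [prob, Finset.sum_mul]
    apply Finset.sum_congr rfl
    intro ω _
    by_cases h : f ω = a <;> simp [h]
  rw [Finset.sum_congr rfl fun a _ => h1 a, Finset.sum_comm]
  apply Finset.sum_congr rfl
  intro ω _
  simp [Finset.sum_ite_eq]

lemma ent_eq {α : Type*} [Fintype α] (f : Ω → α) :
    ent μ f = ∑ ω : Ω, -(μ ω * Real.logb 2 (prob μ f (f ω))) := by
  have h := sum_mu_comp (μ := μ) f (fun a => Real.logb 2 (prob μ f a))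
  simp only [ent]
  rw [Finset.sum_neg_distrib, Finset.sum_neg_distrib]
  exact congrArg Neg.neg h

lemma prob_apply_ge (hμ0 : ∀ ω, 0 ≤ μ ω) {α : Type*} (f : Ω → α) (ω : Ω) :
    μ ω ≤ prob μ f (f ω) := by
  have h := Finset.single_le_sum
    (f := fun ω' => if f ω' = f ω then μ ω' else 0)
    (fun ω' _ => by by_cases h : f ω' = f ω <;> simp [h, hμ0 ω']) (Finset.mem_univ ω)
  simpa [prob] using h

lemma prob_le_of_map (hμ0 : ∀ ω, 0 ≤ μ ω) {α β : Type*} (f : Ω → α) (g : Ω → β)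
    (k : α → β) (hfg : ∀ ω, g ω = k (f ω)) (a : α) :
    prob μ f a ≤ prob μ g (k a) := by
  refine Finset.sum_le_sum fun ω _ => ?_
  by_cases h : f ω = a
  · simp [h, hfg ω]
  · by_cases h2 : g ω = k a <;> simp [h, h2, hμ0 ω]

lemma ent_congr_inj {α β : Type*} [Fintype α] [Fintype β] (f : Ω → α)
    (k : α → β) (hk : Function.Injective k) :
    ent μ (fun ω => k (f ω)) = ent μ f := by
  have hzero : ∀ b, (∀ a, k a ≠ b) → prob μ (fun ω => k (f ω)) b = 0 := by
    intro b hb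
    refine Finset.sum_eq_zero fun ω _ => by simp [hb (f ω)]
  have hk2 : ∀ a, prob μ (fun ω => k (f ω)) (k a) = prob μ f a := by
    intro a
    refine Finset.sum_congr rfl fun ω _ => by simp [hk.eq_iff]
  simp only [ent]
  rw [← Finset.sum_subset (Finset.subset_univ (Finset.univ.image k))]
  · rw [Finset.sum_image (fun x _ y _ h => hk h)]
    exact Finset.sum_congr rfl fun a _ => by rw [hk2]
  · intro b _ hb
    have hb' : ∀ a, k a ≠ b := by
      intro a hab
      exact hb (Finset.mem_image.mpr ⟨a, Finset.mem_univ a, hab⟩)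
    simp [hzero b hb']

lemma ent_eq_of_mutual {α β : Type*} [Fintype α] [Fintype β] (f : Ω → α) (g : Ω → β)
    (k : α → β) (k' : β → α) (h1 : ∀ ω, g ω = k (f ω)) (h2 : ∀ ω, f ω = k' (g ω)) :
    ent μ f = ent μ g := by
  have e1 : ent μ (fun ω => (f ω, g ω)) = ent μ f := by
    have hfe : (fun ω => (f ω, g ω)) = fun ω => ((fun a => (a, k a)) (f ω)) :=
      funext fun ω => by simp [h1 ω]
    rw [hfe]
    exact ent_congr_inj f (fun a => (a, k a)) (fun x y hxy => congrArg Prod.fst hxy)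
  have e2 : ent μ (fun ω => (f ω, g ω)) = ent μ g := by
    have hfe : (fun ω => (f ω, g ω)) = fun ω => ((fun b => (k' b, b)) (g ω)) :=
      funext fun ω => by simp [← h2 ω]
    rw [hfe]
    exact ent_congr_inj g (fun b => (k' b, b)) (fun x y hxy => congrArg Prod.snd hxy)
  rw [← e1, e2]

lemma condEnt_congr_right {α β β' : Type*} [Fintype α] [Fintype β] [Fintype β']
    (f : Ω → α) (g : Ω → β) (g' : Ω → β') (k : β → β') (k' : β' → β)
    (h1 : ∀ ω, g' ω = k (g ω)) (h2 : ∀ ω, g ω = k' (g' ω)) :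
    condEnt μ f g = condEnt μ f g' := by
  simp only [condEnt]
  rw [ent_eq_of_mutual g g' k k' h1 h2,
    ent_eq_of_mutual (fun ω => (f ω, g ω)) (fun ω => (f ω, g' ω))
      (Prod.map id k) (Prod.map id k')
      (fun ω => by simp [Prod.map, h1 ω]) (fun ω => by simp [Prod.map, ← h2 ω])]

lemma ent_const (hμ1 : ∑ ω : Ω, μ ω = 1) {ι : Type*} [Fintype ι] (c : ι) :
    ent μ (fun _ => c) = 0 := by
  simp only [ent, prob]
  refine Finset.sum_eq_zero fun a _ => ?_
  by_cases h : c = a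
  · simp [h, hμ1]
  · simp [h]

lemma sum_prob_pair_fst {α γ : Type*} [Fintype α] (f : Ω → α) (h : Ω → γ) (c : γ) :
    ∑ a : α, prob μ (fun ω => (f ω, h ω)) (a, c) = prob μ h c := by
  simp only [prob]
  rw [Finset.sum_comm]
  apply Finset.sum_congr rfl
  intro ω _
  by_cases hc : h ω = c
  · simp [hc, Prod.ext_iff, Finset.sum_ite_eq]
  · simp [hc, Prod.ext_iff]

lemma ent_snd_le (hμ0 : ∀ ω, 0 ≤ μ ω) {α β : Type*} [Fintype α] [Fintype β]
    (f : Ω → α) (g : Ω → β) :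
    ent μ g ≤ ent μ (fun ω => (f ω, g ω)) := by
  rw [ent_eq, ent_eq]
  refine Finset.sum_le_sum fun ω _ => ?_
  rcases eq_or_lt_of_le (hμ0 ω) with h0 | h0
  · simp [← h0]
  · have h1 : 0 < prob μ (fun ω => (f ω, g ω)) (f ω, g ω) :=
      lt_of_lt_of_le h0 (prob_apply_ge hμ0 _ ω)
    have h2 : prob μ (fun ω => (f ω, g ω)) (f ω, g ω) ≤ prob μ g (g ω) :=
      prob_le_of_map hμ0 (fun ω => (f ω, g ω)) g Prod.snd (fun ω => rfl) (f ω, g ω)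
    have h3 := Real.logb_le_logb_of_le one_lt_two h1 h2
    nlinarith [h0.le]

lemma condEnt_nonneg (hμ0 : ∀ ω, 0 ≤ μ ω) {α β : Type*} [Fintype α] [Fintype β]
    (f : Ω → α) (g : Ω → β) : 0 ≤ condEnt μ f g :=
  sub_nonneg.mpr (ent_snd_le hμ0 f g)

lemma ssa (hμ0 : ∀ ω, 0 ≤ μ ω) (hμ1 : ∑ ω : Ω, μ ω = 1)
    {α β γ : Type*} [Fintype α] [Fintype β] [Fintype γ]
    (f : Ω → α) (g : Ω → β) (h : Ω → γ) :
    ent μ (fun ω => (f ω, g ω, h ω)) + ent μ h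
      ≤ ent μ (fun ω => (f ω, h ω)) + ent μ (fun ω => (g ω, h ω)) := by
  have hL2 : (0:ℝ) < Real.log 2 := Real.log_pos one_lt_two
  set q : α × β × γ → ℝ := prob μ (fun ω => (f ω, g ω, h ω)) with hq
  set pf : α × γ → ℝ := prob μ (fun ω => (f ω, h ω)) with hpf
  set pg : β × γ → ℝ := prob μ (fun ω => (g ω, h ω)) with hpg
  set p : γ → ℝ := prob μ h with hp
  set r : α × β × γ → ℝ :=
    fun x => pf (x.1, x.2.2) * pg (x.2.1, x.2.2) / (q x * p x.2.2) with hr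
  -- pointwise Gibbs bound
  have key : ∀ ω, μ ω * Real.logb 2 (pf (f ω, h ω)) + μ ω * Real.logb 2 (pg (g ω, h ω))
      - μ ω * Real.logb 2 (q (f ω, g ω, h ω)) - μ ω * Real.logb 2 (p (h ω))
      ≤ (μ ω * r (f ω, g ω, h ω) - μ ω) / Real.log 2 := by
    intro ω
    rcases eq_or_lt_of_le (hμ0 ω) with h0 | h0
    · simp [← h0]
    · have hq0 : 0 < q (f ω, g ω, h ω) := lt_of_lt_of_le h0 (prob_apply_ge hμ0 _ ω)
      have hpf0 : 0 < pf (f ω, h ω) := lt_of_lt_of_le h0 (prob_apply_ge hμ0 _ ω)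
      have hpg0 : 0 < pg (g ω, h ω) := lt_of_lt_of_le h0 (prob_apply_ge hμ0 _ ω)
      have hp0 : 0 < p (h ω) := lt_of_lt_of_le h0 (prob_apply_ge hμ0 _ ω)
      have hx : 0 < r (f ω, g ω, h ω) := by
        rw [hr]
        exact div_pos (mul_pos hpf0 hpg0) (mul_pos hq0 hp0)
      have hlog : Real.log (r (f ω, g ω, h ω)) ≤ r (f ω, g ω, h ω) - 1 :=
        Real.log_le_sub_one_of_pos hx
      have hlogb : Real.logb 2 (pf (f ω, h ω)) + Real.logb 2 (pg (g ω, h ω))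
          - Real.logb 2 (q (f ω, g ω, h ω)) - Real.logb 2 (p (h ω))
          = Real.logb 2 (r (f ω, g ω, h ω)) := by
        rw [hr]
        rw [Real.logb_div (by positivity) (by positivity),
          Real.logb_mul hpf0.ne' hpg0.ne', Real.logb_mul hq0.ne' hp0.ne']
        ring
      have hb2 : Real.logb 2 (r (f ω, g ω, h ω)) ≤ (r (f ω, g ω, h ω) - 1) / Real.log 2 := by
        rw [Real.logb]
        exact div_le_div_of_nonneg_right hlog hL2.le
      calc μ ω * Real.logb 2 (pf (f ω, h ω)) + μ ω * Real.logb 2 (pg (g ω, h ω))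
            - μ ω * Real.logb 2 (q (f ω, g ω, h ω)) - μ ω * Real.logb 2 (p (h ω))
          = μ ω * (Real.logb 2 (pf (f ω, h ω)) + Real.logb 2 (pg (g ω, h ω))
            - Real.logb 2 (q (f ω, g ω, h ω)) - Real.logb 2 (p (h ω))) := by ring
        _ = μ ω * Real.logb 2 (r (f ω, g ω, h ω)) := by rw [hlogb]
        _ ≤ μ ω * ((r (f ω, g ω, h ω) - 1) / Real.log 2) :=
            mul_le_mul_of_nonneg_left hb2 h0.le
        _ = (μ ω * r (f ω, g ω, h ω) - μ ω) / Real.log 2 := by ring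
  -- sum of the ratio term is at most 1
  have hsum1 : ∑ ω : Ω, μ ω * r (f ω, g ω, h ω) = ∑ x : α × β × γ, q x * r x :=
    (sum_mu_comp (fun ω => (f ω, g ω, h ω)) r).symm
  have hsum2 : ∑ x : α × β × γ, q x * r x
      ≤ ∑ x : α × β × γ, pf (x.1, x.2.2) * pg (x.2.1, x.2.2) / p x.2.2 := by
    refine Finset.sum_le_sum fun x _ => ?_
    rcases eq_or_lt_of_le (prob_nonneg hμ0 (fun ω => (f ω, g ω, h ω)) x) with h0 | h0
    · rw [show q x = 0 from h0.symm]
      have h1 : 0 ≤ pf (x.1, x.2.2) := prob_nonneg hμ0 _ _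
      have h2 : 0 ≤ pg (x.2.1, x.2.2) := prob_nonneg hμ0 _ _
      have h3 : 0 ≤ p x.2.2 := prob_nonneg hμ0 _ _
      simp only [zero_mul]
      positivity
    · have hqx : 0 < q x := h0
      have hpx : 0 < p x.2.2 := by
        have hle : q x ≤ p x.2.2 := by
          have := prob_le_of_map hμ0 (fun ω => (f ω, g ω, h ω)) h
            (fun y => y.2.2) (fun ω => rfl) x
          exact this
        exact lt_of_lt_of_le hqx hle
      rw [hr]
      rw [show q x * (pf (x.1, x.2.2) * pg (x.2.1, x.2.2) / (q x * p x.2.2))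
        = pf (x.1, x.2.2) * pg (x.2.1, x.2.2) / p x.2.2 by
          field_simp]
  have hsum3 : ∑ x : α × β × γ, pf (x.1, x.2.2) * pg (x.2.1, x.2.2) / p x.2.2 ≤ 1 := by
    rw [Fintype.sum_prod_type]
    have hre : ∀ a : α, ∑ y : β × γ, pf (a, y.2) * pg (y.1, y.2) / p y.2
        = ∑ c : γ, ∑ b : β, pf (a, c) * pg (b, c) / p c := by
      intro a
      rw [Fintype.sum_prod_type]
      exact Finset.sum_comm
    rw [Finset.sum_congr rfl fun a _ => hre a, Finset.sum_comm]
    have hc : ∀ c : γ, ∑ a : α, ∑ b : β, pf (a, c) * pg (b, c) / p c ≤ p c := by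
      intro c
      have hinner : ∀ a : α, ∑ b : β, pf (a, c) * pg (b, c) / p c
          = pf (a, c) * (∑ b : β, pg (b, c)) / p c := by
        intro a
        rw [Finset.mul_sum, Finset.sum_div]
      rw [Finset.sum_congr rfl fun a _ => hinner a]
      have hmg : ∑ b : β, pg (b, c) = p c := sum_prob_pair_fst g h c
      have hmf : ∑ a : α, pf (a, c) = p c := sum_prob_pair_fst f h c
      rw [Finset.sum_congr rfl fun a _ => by rw [hmg]]
      rw [← Finset.sum_div, ← Finset.sum_mul, hmf]
      rcases eq_or_lt_of_le (prob_nonneg hμ0 h c) with h0 | h0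
      · rw [show p c = 0 from h0.symm]
        simp
      · rw [mul_div_assoc, div_self h0.ne', mul_one]
    calc ∑ c : γ, ∑ a : α, ∑ b : β, pf (a, c) * pg (b, c) / p c
        ≤ ∑ c : γ, p c := Finset.sum_le_sum fun c _ => hc c
      _ = 1 := sum_prob_one hμ1 h
  have hfinal : ∑ ω : Ω, (μ ω * Real.logb 2 (pf (f ω, h ω)) + μ ω * Real.logb 2 (pg (g ω, h ω))
      - μ ω * Real.logb 2 (q (f ω, g ω, h ω)) - μ ω * Real.logb 2 (p (h ω))) ≤ 0 := by
    calc ∑ ω : Ω, (μ ω * Real.logb 2 (pf (f ω, h ω)) + μ ω * Real.logb 2 (pg (g ω, h ω))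
          - μ ω * Real.logb 2 (q (f ω, g ω, h ω)) - μ ω * Real.logb 2 (p (h ω)))
        ≤ ∑ ω : Ω, (μ ω * r (f ω, g ω, h ω) - μ ω) / Real.log 2 :=
          Finset.sum_le_sum fun ω _ => key ω
      _ = ((∑ ω : Ω, μ ω * r (f ω, g ω, h ω)) - 1) / Real.log 2 := by
          rw [← Finset.sum_div, Finset.sum_sub_distrib, hμ1]
      _ ≤ 0 := by
          have hle : (∑ ω : Ω, μ ω * r (f ω, g ω, h ω)) - 1 ≤ 0 := by
            rw [hsum1]; linarith
          exact div_nonpos_of_nonpos_of_nonneg hle hL2.le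
  rw [ent_eq (fun ω => (f ω, g ω, h ω)), ent_eq h, ent_eq (fun ω => (f ω, h ω)),
    ent_eq (fun ω => (g ω, h ω))]
  simp only [Finset.sum_neg_distrib]
  have hexp : ∑ ω : Ω, (μ ω * Real.logb 2 (pf (f ω, h ω)) + μ ω * Real.logb 2 (pg (g ω, h ω))
      - μ ω * Real.logb 2 (q (f ω, g ω, h ω)) - μ ω * Real.logb 2 (p (h ω)))
      = (∑ ω : Ω, μ ω * Real.logb 2 (pf (f ω, h ω)))
      + (∑ ω : Ω, μ ω * Real.logb 2 (pg (g ω, h ω)))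
      - (∑ ω : Ω, μ ω * Real.logb 2 (q (f ω, g ω, h ω)))
      - (∑ ω : Ω, μ ω * Real.logb 2 (p (h ω))) := by
    rw [Finset.sum_sub_distrib, Finset.sum_sub_distrib, Finset.sum_add_distrib]
  rw [hexp] at hfinal
  linarith

lemma cmi_nonneg (hμ0 : ∀ ω, 0 ≤ μ ω) (hμ1 : ∑ ω : Ω, μ ω = 1)
    {α β γ : Type*} [Fintype α] [Fintype β] [Fintype γ]
    (f : Ω → α) (g : Ω → β) (h : Ω → γ) : 0 ≤ cmi μ f g h := by
  have hs := ssa hμ0 hμ1 f g h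
  simp only [cmi, condEnt]
  linarith

lemma ent_le_logb_card {α : Type*} [Fintype α] [Nonempty α]
    (hμ0 : ∀ ω, 0 ≤ μ ω) (hμ1 : ∑ ω : Ω, μ ω = 1) (f : Ω → α) :
    ent μ f ≤ Real.logb 2 (Fintype.card α) := by
  have hL2 : (0:ℝ) < Real.log 2 := Real.log_pos one_lt_two
  have hn : (0:ℝ) < (Fintype.card α : ℝ) := by
    exact_mod_cast Fintype.card_pos
  set n : ℝ := (Fintype.card α : ℝ) with hndef
  have key : ∀ a : α, -(prob μ f a * Real.logb 2 (prob μ f a))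
      ≤ prob μ f a * Real.logb 2 n + (n⁻¹ - prob μ f a) / Real.log 2 := by
    intro a
    rcases eq_or_lt_of_le (prob_nonneg hμ0 f a) with h0 | h0
    · rw [← h0]
      simp only [zero_mul, neg_zero, zero_add, sub_zero]
      positivity
    · set pa := prob μ f a with hpa
      have h1 : 0 < pa * n := mul_pos h0 hn
      have hlog : Real.log ((pa * n)⁻¹) ≤ (pa * n)⁻¹ - 1 :=
        Real.log_le_sub_one_of_pos (by positivity)
      have hlogb : -(Real.logb 2 pa) = Real.logb 2 ((pa * n)⁻¹) + Real.logb 2 n := by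
        rw [Real.logb_inv, Real.logb_mul h0.ne' hn.ne']
        ring
      have hb2 : Real.logb 2 ((pa * n)⁻¹) ≤ ((pa * n)⁻¹ - 1) / Real.log 2 := by
        rw [Real.logb]
        exact div_le_div_of_nonneg_right hlog hL2.le
      calc -(pa * Real.logb 2 pa) = pa * (-(Real.logb 2 pa)) := by ring
        _ = pa * Real.logb 2 ((pa * n)⁻¹) + pa * Real.logb 2 n := by rw [hlogb]; ring
        _ ≤ pa * (((pa * n)⁻¹ - 1) / Real.log 2) + pa * Real.logb 2 n := by
            have := mul_le_mul_of_nonneg_left hb2 h0.le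
            linarith
        _ = pa * ((pa * n)⁻¹ - 1) / Real.log 2 + pa * Real.logb 2 n := by ring
        _ = pa * Real.logb 2 n + (n⁻¹ - pa) / Real.log 2 := by
            have hpan : pa * (pa * n)⁻¹ = n⁻¹ := by
              rw [mul_inv, ← mul_assoc, mul_inv_cancel₀ h0.ne', one_mul]
            rw [mul_sub, hpan, mul_one]
            ring
  calc ent μ f ≤ ∑ a : α, (prob μ f a * Real.logb 2 n + (n⁻¹ - prob μ f a) / Real.log 2) :=
        Finset.sum_le_sum fun a _ => key a
    _ = (∑ a : α, prob μ f a) * Real.logb 2 n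
        + ((∑ a : α, (n⁻¹ : ℝ)) - ∑ a : α, prob μ f a) / Real.log 2 := by
        rw [Finset.sum_add_distrib, ← Finset.sum_mul, ← Finset.sum_div, Finset.sum_sub_distrib]
    _ = Real.logb 2 n := by
        rw [sum_prob_one hμ1 f]
        rw [Finset.sum_const, Finset.card_univ, nsmul_eq_mul]
        rw [hndef]
        rw [mul_inv_cancel₀ hn.ne']
        simp

lemma cmi_swap {α β γ δ : Type*} [Fintype α] [Fintype β] [Fintype γ] [Fintype δ]
    (f : Ω → α) (g : Ω → β) (h : Ω → γ) (s : Ω → δ) :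
    cmi μ f g h - cmi μ f g (fun ω => (h ω, s ω))
      = cmi μ s g h - cmi μ s g (fun ω => (f ω, h ω)) := by
  have e1 : ent μ (fun ω => (f ω, (g ω, h ω))) = ent μ (fun ω => (g ω, (f ω, h ω))) :=
    ent_eq_of_mutual _ _ (fun x => (x.2.1, (x.1, x.2.2))) (fun x => (x.2.1, (x.1, x.2.2)))
      (fun ω => rfl) (fun ω => rfl)
  have e2 : ent μ (fun ω => (f ω, (h ω, s ω))) = ent μ (fun ω => (s ω, (f ω, h ω))) :=
    ent_eq_of_mutual _ _ (fun x => (x.2.2, (x.1, x.2.1))) (fun x => (x.2.1, (x.2.2, x.1)))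
      (fun ω => rfl) (fun ω => rfl)
  have e3 : ent μ (fun ω => (h ω, s ω)) = ent μ (fun ω => (s ω, h ω)) :=
    ent_eq_of_mutual _ _ (fun x => (x.2, x.1)) (fun x => (x.2, x.1))
      (fun ω => rfl) (fun ω => rfl)
  have e4 : ent μ (fun ω => (f ω, (g ω, (h ω, s ω))))
      = ent μ (fun ω => (s ω, (g ω, (f ω, h ω)))) :=
    ent_eq_of_mutual _ _ (fun x => (x.2.2.2, (x.2.1, (x.1, x.2.2.1))))
      (fun x => (x.2.2.1, (x.2.1, (x.2.2.2, x.1)))) (fun ω => rfl) (fun ω => rfl)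
  have e5 : ent μ (fun ω => (g ω, (h ω, s ω))) = ent μ (fun ω => (s ω, (g ω, h ω))) :=
    ent_eq_of_mutual _ _ (fun x => (x.2.2, (x.1, x.2.1))) (fun x => (x.2.1, (x.2.2, x.1)))
      (fun ω => rfl) (fun ω => rfl)
  simp only [cmi, condEnt]
  linarith

variable {N : ℕ}

/-- `ℕ`-indexed strict prefix. -/
def pfx {𝒵 : Type*} (Z : Ω → Fin N → 𝒵) (k : ℕ) : Ω → Fin N → Option 𝒵 :=
  fun ω j => if (j : ℕ) < k then some (Z ω j) else none

lemma prefixLT_eq {𝒵 : Type*} (Z : Ω → Fin N → 𝒵) (i : Fin N) :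
    prefixLT Z i = pfx Z (i : ℕ) := by
  funext ω j
  simp only [prefixLT, pfx]
  by_cases h : j < i
  · rw [if_pos h, if_pos (Fin.lt_def.mp h)]
  · rw [if_neg h, if_neg (fun hc => h (Fin.lt_def.mpr hc))]

lemma prefixIncl_eq {𝒵 : Type*} (Z : Ω → Fin N → 𝒵) (i : Fin N) :
    prefixIncl Z i = pfx Z ((i : ℕ) + 1) := by
  funext ω j
  simp only [prefixIncl, pfx]
  by_cases h : j ≤ i
  · rw [if_pos h, if_pos (Nat.lt_succ_iff.mpr (Fin.le_def.mp h))]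
  · rw [if_neg h, if_neg (fun hc => h (Fin.le_def.mpr (Nat.lt_succ_iff.mp hc)))]

lemma pfx_zero {𝒵 : Type*} (Z : Ω → Fin N → 𝒵) :
    pfx Z 0 = fun _ _ => (none : Option 𝒵) := by
  funext ω j
  simp [pfx]

lemma condEnt_pfx_zero (hμ1 : ∑ ω : Ω, μ ω = 1) {𝒵 𝒮 : Type*} [Fintype 𝒵] [Fintype 𝒮]
    (S₀ : Ω → 𝒮) (Z : Ω → Fin N → 𝒵) :
    condEnt μ S₀ (pfx Z 0) = ent μ S₀ := by
  rw [pfx_zero]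
  simp only [condEnt]
  rw [ent_const hμ1 (fun _ => (none : Option 𝒵))]
  rw [ent_eq_of_mutual (fun ω => (S₀ ω, fun _ => (none : Option 𝒵))) S₀
    Prod.fst (fun s => (s, fun _ => none)) (fun ω => rfl) (fun ω => rfl)]
  ring

lemma A_eq {𝒴 𝒮 : Type*} [Fintype 𝒴] [Fintype 𝒮]
    (S₀ : Ω → 𝒮) (Y : Ω → Fin N → 𝒴) (y₀ : 𝒴) (i : Fin N) :
    cmi μ S₀ (fun ω => Y ω i) (prefixLT Y i)
      = condEnt μ S₀ (pfx Y (i : ℕ)) - condEnt μ S₀ (pfx Y ((i : ℕ) + 1)) := by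
  simp only [cmi]
  rw [prefixLT_eq]
  congr 1
  refine condEnt_congr_right S₀ _ _
    (fun t : 𝒴 × (Fin N → Option 𝒴) =>
      (fun j => if j = i then some t.1 else if (j : ℕ) < (i : ℕ) then t.2 j else none))
    (fun q : Fin N → Option 𝒴 =>
      ((q i).getD y₀, fun j => if (j : ℕ) < (i : ℕ) then q j else none))
    ?_ ?_
  · intro ω
    funext j
    simp only [pfx]
    by_cases hji : j = i
    · subst hji
      simp
    · have hne : (j : ℕ) ≠ (i : ℕ) := fun hc => hji (Fin.ext hc)
      by_cases hlt : (j : ℕ) < (i : ℕ)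
      · simp only [if_neg hji, if_pos hlt]
        rw [if_pos (by omega)]
      · simp only [if_neg hji, if_neg hlt]
        rw [if_neg (by omega)]
  · intro ω
    refine Prod.ext ?_ ?_
    · simp [pfx]
    · funext j
      simp only [pfx]
      by_cases hlt : (j : ℕ) < (i : ℕ)
      · simp only [if_pos hlt]
        rw [if_pos (by omega)]
      · simp [hlt]

lemma B_le (hμ0 : ∀ ω, 0 ≤ μ ω) (hμ1 : ∑ ω : Ω, μ ω = 1)
    {𝒰 𝒴 𝒮 : Type*} [Fintype 𝒰] [Fintype 𝒴] [Fintype 𝒮]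
    (S₀ : Ω → 𝒮) (U : Ω → Fin N → 𝒰) (Y : Ω → Fin N → 𝒴) (u₀ : 𝒰) (y₀ : 𝒴) (i : Fin N) :
    cmi μ S₀ (fun ω => Y ω i) (fun ω => (prefixIncl U i ω, prefixLT Y i ω))
      ≤ condEnt μ S₀ (pfx (fun ω j => (U ω j, Y ω j)) (i : ℕ))
        - condEnt μ S₀ (pfx (fun ω j => (U ω j, Y ω j)) ((i : ℕ) + 1)) := by
  set W : Ω → Fin N → 𝒰 × 𝒴 := fun ω j => (U ω j, Y ω j) with hW
  have stepA : condEnt μ S₀ (fun ω => (Y ω i, (prefixIncl U i ω, prefixLT Y i ω)))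
      = condEnt μ S₀ (pfx W ((i : ℕ) + 1)) := by
    refine condEnt_congr_right S₀ _ _
      (fun t : 𝒴 × ((Fin N → Option 𝒰) × (Fin N → Option 𝒴)) =>
        (fun j => if (j : ℕ) < (i : ℕ) then some ((t.2.1 j).getD u₀, (t.2.2 j).getD y₀)
          else if j = i then some ((t.2.1 j).getD u₀, t.1) else none))
      (fun q : Fin N → Option (𝒰 × 𝒴) =>
        (((q i).map Prod.snd).getD y₀,
          (fun j => if j ≤ i then (q j).map Prod.fst else none,
           fun j => if j < i then (q j).map Prod.snd else none)))
      ?_ ?_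
    · intro ω
      funext j
      simp only [pfx, hW, prefixIncl, prefixLT]
      by_cases hlt : (j : ℕ) < (i : ℕ)
      · rw [if_pos (by omega : (j : ℕ) < (i : ℕ) + 1), if_pos hlt]
        rw [if_pos (by rw [Fin.le_def]; omega : j ≤ i), if_pos (by rw [Fin.lt_def]; exact hlt : j < i)]
        simp
      · by_cases hji : j = i
        · subst hji
          rw [if_pos (by omega : (j : ℕ) < (j : ℕ) + 1), if_neg hlt, if_pos rfl,
            if_pos (le_refl j)]
          simp
        · have hne : (j : ℕ) ≠ (i : ℕ) := fun hc => hji (Fin.ext hc)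
          rw [if_neg (by omega : ¬ (j : ℕ) < (i : ℕ) + 1), if_neg hlt, if_neg hji]
    · intro ω
      refine Prod.ext ?_ (Prod.ext ?_ ?_)
      · simp only [pfx, hW]
        rw [if_pos (by omega : (i : ℕ) < (i : ℕ) + 1)]
        simp
      · funext j
        simp only [pfx, hW, prefixIncl]
        by_cases hle : j ≤ i
        · rw [if_pos hle, if_pos hle]
          rw [if_pos (by rw [Fin.le_def] at hle; omega : (j : ℕ) < (i : ℕ) + 1)]
          simp
        · rw [if_neg hle, if_neg hle]
      · funext j
        simp only [pfx, hW, prefixLT]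
        by_cases hlt : j < i
        · rw [if_pos hlt, if_pos hlt]
          rw [if_pos (by rw [Fin.lt_def] at hlt; omega : (j : ℕ) < (i : ℕ) + 1)]
          simp
        · rw [if_neg hlt, if_neg hlt]
  have stepB : condEnt μ S₀ (fun ω => (prefixIncl U i ω, prefixLT Y i ω))
      = condEnt μ S₀ (fun ω => (U ω i, pfx W (i : ℕ) ω)) := by
    refine condEnt_congr_right S₀ _ _
      (fun t : (Fin N → Option 𝒰) × (Fin N → Option 𝒴) =>
        ((t.1 i).getD u₀,
          fun j => if (j : ℕ) < (i : ℕ) then some ((t.1 j).getD u₀, (t.2 j).getD y₀) else none))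
      (fun t : 𝒰 × (Fin N → Option (𝒰 × 𝒴)) =>
        (fun j => if j = i then some t.1 else (t.2 j).map Prod.fst,
         fun j => (t.2 j).map Prod.snd))
      ?_ ?_
    · intro ω
      refine Prod.ext ?_ ?_
      · simp only [prefixIncl]
        rw [if_pos (le_refl i)]
        simp
      · funext j
        simp only [pfx, hW, prefixIncl, prefixLT]
        by_cases hlt : (j : ℕ) < (i : ℕ)
        · rw [if_pos hlt, if_pos hlt]
          rw [if_pos (by rw [Fin.le_def]; omega : j ≤ i)]
          rw [if_pos (by rw [Fin.lt_def]; exact hlt : j < i)]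
          simp
        · rw [if_neg hlt, if_neg hlt]
    · intro ω
      refine Prod.ext ?_ ?_
      · funext j
        simp only [pfx, hW, prefixIncl]
        by_cases hji : j = i
        · subst hji
          rw [if_pos rfl, if_pos (le_refl j)]
        · have hne : (j : ℕ) ≠ (i : ℕ) := fun hc => hji (Fin.ext hc)
          rw [if_neg hji]
          by_cases hlt : (j : ℕ) < (i : ℕ)
          · rw [if_pos hlt, if_pos (by rw [Fin.le_def]; omega : j ≤ i)]
            simp
          · rw [if_neg hlt, if_neg (by rw [Fin.le_def]; omega : ¬ j ≤ i)]
            simp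
      · funext j
        simp only [pfx, hW, prefixLT]
        by_cases hlt : j < i
        · rw [if_pos hlt, if_pos (by rw [Fin.lt_def] at hlt; exact hlt : (j : ℕ) < (i : ℕ))]
          simp
        · rw [if_neg hlt, if_neg (by rw [Fin.lt_def] at hlt; exact hlt : ¬ (j : ℕ) < (i : ℕ))]
          simp
  have stepC : condEnt μ S₀ (fun ω => (U ω i, pfx W (i : ℕ) ω))
      ≤ condEnt μ S₀ (pfx W (i : ℕ)) := by
    have hc := cmi_nonneg hμ0 hμ1 S₀ (fun ω => U ω i) (pfx W (i : ℕ))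
    simp only [cmi] at hc
    linarith
  simp only [cmi]
  linarith

end DI

end DIAux

/-- For jointly distributed finite processes `U^N, Y^N` and an initial state
`S_0` with finite alphabet `𝒮`,
`|I(U^N → Y^N) − I(U^N → Y^N | S_0)| ≤ log₂ |𝒮|`. -/
theorem abs_dirInfo_sub_dirInfoCond_le
    {Ω 𝒰 𝒴 𝒮 : Type*} [Fintype Ω] [Fintype 𝒰] [Fintype 𝒴] [Fintype 𝒮]
    {N : ℕ}
    (μ : Ω → ℝ) (hμ0 : ∀ ω, 0 ≤ μ ω) (hμ1 : ∑ ω : Ω, μ ω = 1)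
    (U : Ω → Fin N → 𝒰) (Y : Ω → Fin N → 𝒴) (S₀ : Ω → 𝒮) :
    |dirInfo μ U Y - dirInfoCond μ U Y S₀| ≤ Real.logb 2 (Fintype.card 𝒮) := by
  classical
  have hΩ : Nonempty Ω := by
    by_contra hc
    rw [not_nonempty_iff] at hc
    rw [Finset.univ_eq_empty, Finset.sum_empty] at hμ1
    norm_num at hμ1
  obtain ⟨ω₀⟩ := hΩ
  haveI : Nonempty 𝒮 := ⟨S₀ ω₀⟩
  have hL0 : 0 ≤ Real.logb 2 (Fintype.card 𝒮) :=
    Real.logb_nonneg one_lt_two (by exact_mod_cast Fintype.card_pos (α := 𝒮))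
  rcases Nat.eq_zero_or_pos N with hN | hN
  · subst hN
    simp only [dirInfo, dirInfoCond, Finset.univ_eq_empty, Finset.sum_empty]
    simpa using hL0
  · set y₀ : 𝒴 := Y ω₀ ⟨0, hN⟩ with hy₀
    set u₀ : 𝒰 := U ω₀ ⟨0, hN⟩ with hu₀
    set W : Ω → Fin N → 𝒰 × 𝒴 := fun ω j => (U ω j, Y ω j) with hW
    set A : Fin N → ℝ := fun i => cmi μ S₀ (fun ω => Y ω i) (prefixLT Y i) with hA
    set B : Fin N → ℝ := fun i =>
      cmi μ S₀ (fun ω => Y ω i) (fun ω => (prefixIncl U i ω, prefixLT Y i ω)) with hB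
    have hES : ent μ S₀ ≤ Real.logb 2 (Fintype.card 𝒮) :=
      DI.ent_le_logb_card hμ0 hμ1 S₀
    -- difference identity
    have hdiff : dirInfo μ U Y - dirInfoCond μ U Y S₀ = (∑ i, A i) - (∑ i, B i) := by
      rw [dirInfo, dirInfoCond, ← Finset.sum_sub_distrib, ← Finset.sum_sub_distrib]
      refine Finset.sum_congr rfl fun i _ => ?_
      exact DI.cmi_swap (prefixIncl U i) (fun ω => Y ω i) (prefixLT Y i) S₀
    -- bounds for A
    have hAsum : ∑ i, A i = ent μ S₀ - condEnt μ S₀ (DI.pfx Y N) := by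
      have h1 : ∀ i : Fin N, A i
          = condEnt μ S₀ (DI.pfx Y (i : ℕ)) - condEnt μ S₀ (DI.pfx Y ((i : ℕ) + 1)) :=
        fun i => DI.A_eq S₀ Y y₀ i
      calc ∑ i, A i
          = ∑ i : Fin N, (condEnt μ S₀ (DI.pfx Y (i : ℕ))
            - condEnt μ S₀ (DI.pfx Y ((i : ℕ) + 1))) := Finset.sum_congr rfl fun i _ => h1 i
        _ = ∑ k ∈ Finset.range N, (condEnt μ S₀ (DI.pfx Y k)
            - condEnt μ S₀ (DI.pfx Y (k + 1))) :=
            Fin.sum_univ_eq_sum_range (fun k => condEnt μ S₀ (DI.pfx Y k)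
              - condEnt μ S₀ (DI.pfx Y (k + 1))) N
        _ = condEnt μ S₀ (DI.pfx Y 0) - condEnt μ S₀ (DI.pfx Y N) :=
            Finset.sum_range_sub' (fun k => condEnt μ S₀ (DI.pfx Y k)) N
        _ = ent μ S₀ - condEnt μ S₀ (DI.pfx Y N) := by
            rw [DI.condEnt_pfx_zero hμ1 S₀ Y]
    have hA0 : 0 ≤ ∑ i, A i :=
      Finset.sum_nonneg fun i _ => DI.cmi_nonneg hμ0 hμ1 _ _ _
    have hG1N : 0 ≤ condEnt μ S₀ (DI.pfx Y N) := DI.condEnt_nonneg hμ0 _ _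
    -- bounds for B
    have hBle : ∑ i, B i ≤ ent μ S₀ - condEnt μ S₀ (DI.pfx W N) := by
      calc ∑ i, B i
          ≤ ∑ i : Fin N, (condEnt μ S₀ (DI.pfx W (i : ℕ))
            - condEnt μ S₀ (DI.pfx W ((i : ℕ) + 1))) :=
            Finset.sum_le_sum fun i _ => DI.B_le hμ0 hμ1 S₀ U Y u₀ y₀ i
        _ = ∑ k ∈ Finset.range N, (condEnt μ S₀ (DI.pfx W k)
            - condEnt μ S₀ (DI.pfx W (k + 1))) :=
            Fin.sum_univ_eq_sum_range (fun k => condEnt μ S₀ (DI.pfx W k)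
              - condEnt μ S₀ (DI.pfx W (k + 1))) N
        _ = condEnt μ S₀ (DI.pfx W 0) - condEnt μ S₀ (DI.pfx W N) :=
            Finset.sum_range_sub' (fun k => condEnt μ S₀ (DI.pfx W k)) N
        _ = ent μ S₀ - condEnt μ S₀ (DI.pfx W N) := by
            rw [DI.condEnt_pfx_zero hμ1 S₀ W]
    have hB0 : 0 ≤ ∑ i, B i :=
      Finset.sum_nonneg fun i _ => DI.cmi_nonneg hμ0 hμ1 _ _ _
    have hG2N : 0 ≤ condEnt μ S₀ (DI.pfx W N) := DI.condEnt_nonneg hμ0 _ _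
    rw [hdiff, abs_sub_le_iff]
    constructor <;> linarith
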